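/- A picking sequence π on n agents and m items satisfies weighted proportionality up to one item (WPROP1) — that is, for every profile of additive utility functions the allocation it produces is WPROP1 — if and only if for every prefix of π of length k and every agent i, we have t_i ≥ (w_i / Σ_{i'∈N} w_{i'}) · k − 1, where t_i denotes the number of picks of agent i in that prefix. -/

import Mathlib

open Finset

/-- The favorite item of an agent with item-utility function `u` among a remaining
set `R` of items: a highest-valued item, ties broken in favor of the lower-numbered item. -/
noncomputable def favorite {m : ℕ} (u : Fin m → ℝ) (R : Finset (Fin m)) : Option (Fin m) :=
  if h : (R.filter fun j => ∀ j' ∈ R, u j' ≤ u j).Nonempty then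
    some ((R.filter fun j => ∀ j' ∈ R, u j' ≤ u j).min' h)
  else none

/-- One step of the picking process: agent `a` picks her favorite remaining item. -/
noncomputable def pickStep {n m : ℕ} (u : Fin n → Fin m → ℝ)
    (st : Finset (Fin m) × (Fin n → Finset (Fin m))) (a : Fin n) :
    Finset (Fin m) × (Fin n → Finset (Fin m)) :=
  match favorite (u a) st.1 with
  | none => st
  | some j => (st.1.erase j, Function.update st.2 a (insert j (st.2 a)))

/-- The allocation produced by letting agents pick their favorite remaining items
in the order given by the picking sequence `π`. -/
noncomputable def allocate {n m : ℕ} (u : Fin n → Fin m → ℝ) (π : List (Fin n)) :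
    Fin n → Finset (Fin m) :=
  (π.foldl (pickStep u) (Finset.univ, fun _ => ∅)).2

/-- Weighted proportionality up to one item. -/
def isWPROP1 {n m : ℕ} (w : Fin n → ℝ) (u : Fin n → Fin m → ℝ)
    (M : Fin n → Finset (Fin m)) : Prop :=
  ∀ i : Fin n, ∃ B ⊆ Finset.univ \ M i, B.card ≤ 1 ∧
    w i / (∑ i', w i') * (∑ x, u i x) - (∑ x ∈ B, u i x) ≤ ∑ x ∈ M i, u i x

/-- A picking sequence `π` satisfies WPROP1 (for every profile of
additive utility functions the allocation it produces is WPROP1) if and only if for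
every prefix of `π` of length `k` and every agent `i`,
`t_i ≥ (w_i / Σ_{i'} w_{i'}) · k - 1`. -/
lemma favorite_eq_some {m : ℕ} (u : Fin m → ℝ) {R : Finset (Fin m)} (hR : R.Nonempty) :
    ∃ j, favorite u R = some j := by
  obtain ⟨j, hj, hmax⟩ := R.exists_max_image u hR
  have h : (R.filter fun j => ∀ j' ∈ R, u j' ≤ u j).Nonempty :=
    ⟨j, mem_filter.2 ⟨hj, hmax⟩⟩
  exact ⟨_, dif_pos h⟩

lemma favorite_spec {m : ℕ} {u : Fin m → ℝ} {R : Finset (Fin m)} {j : Fin m}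
    (h : favorite u R = some j) : j ∈ R ∧ ∀ x ∈ R, u x ≤ u j := by
  unfold favorite at h
  split_ifs at h with hne
  · rw [Option.some_inj] at h
    have hm := Finset.mem_filter.mp (Finset.min'_mem _ hne)
    rw [← h]
    exact hm

noncomputable def st {n m : ℕ} (u : Fin n → Fin m → ℝ) (π : List (Fin n)) (t : ℕ) :
    Finset (Fin m) × (Fin n → Finset (Fin m)) :=
  (π.take t).foldl (pickStep u) (Finset.univ, fun _ => ∅)

noncomputable def pick {n m : ℕ} (u : Fin n → Fin m → ℝ) (π : List (Fin n))
    (i0 : Fin n) (d0 : Fin m) (t : ℕ) : Fin m :=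
  (favorite (u (π.getD t i0)) (st u π t).1).getD d0

lemma st_succ {n m : ℕ} (u : Fin n → Fin m → ℝ) (π : List (Fin n)) (i0 : Fin n)
    {t : ℕ} (h : t < π.length) :
    st u π (t+1) = pickStep u (st u π t) (π.getD t i0) := by
  have h1 : π.take (t+1) = π.take t ++ [π[t]] := (List.take_concat_get' π t h).symm
  have h2 : π.getD t i0 = π[t] := List.getD_eq_getElem π i0 h
  rw [st, st, h1, List.foldl_append, h2]
  simp

lemma master {n m : ℕ} (u : Fin n → Fin m → ℝ) (π : List (Fin n)) (i0 : Fin n) (d0 : Fin m)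
    (hπ : π.length = m) :
    ∀ t, t ≤ m →
      ((st u π t).1 = univ \ (range t).image (pick u π i0 d0)) ∧
      (∀ a, (st u π t).2 a
          = ((range t).filter (fun s => π.getD s i0 = a)).image (pick u π i0 d0)) ∧
      (∀ s, s < t → favorite (u (π.getD s i0)) (st u π s).1 = some (pick u π i0 d0 s)) ∧
      ((range t).image (pick u π i0 d0)).card = t := by
  intro t
  induction t with
  | zero =>
    intro _
    refine ⟨by simp [st], fun a => by simp [st], fun s hs => absurd hs (Nat.not_lt_zero s),
      by simp⟩
  | succ t ih =>
    intro ht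
    have htm : t < m := ht
    obtain ⟨hA, hB, hC, hD⟩ := ih (le_of_lt htm)
    have hcard : (st u π t).1.card = m - t := by
      rw [hA, Finset.card_sdiff_of_subset (Finset.subset_univ _), hD, Finset.card_univ, Fintype.card_fin]
    have hne : (st u π t).1.Nonempty := by
      rw [← Finset.card_pos, hcard]; omega
    obtain ⟨j, hj⟩ := favorite_eq_some (u (π.getD t i0)) hne
    have hpickt : pick u π i0 d0 t = j := by rw [pick, hj]; rfl
    obtain ⟨hjmem, hjmax⟩ := favorite_spec hj
    have hstep : st u π (t+1) = ((st u π t).1.erase j,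
        Function.update (st u π t).2 (π.getD t i0) (insert j ((st u π t).2 (π.getD t i0)))) := by
      rw [st_succ u π i0 (by omega : t < π.length)]
      simp only [pickStep]
      rw [hj]
    have hjnot : j ∉ (range t).image (pick u π i0 d0) := by
      rw [hA] at hjmem; exact (Finset.mem_sdiff.mp hjmem).2
    have himg : (range (t+1)).image (pick u π i0 d0)
        = insert j ((range t).image (pick u π i0 d0)) := by
      rw [Finset.range_add_one, Finset.image_insert, hpickt]
    refine ⟨?_, ?_, ?_, ?_⟩
    · rw [hstep]
      show (st u π t).1.erase j = _
      rw [hA, himg]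
      ext x
      simp only [Finset.mem_erase, Finset.mem_sdiff, Finset.mem_univ, true_and,
        Finset.mem_insert]
      tauto
    · intro a
      rw [hstep]
      show Function.update _ _ _ a = _
      rw [Finset.range_add_one, Finset.filter_insert]
      by_cases hae : π.getD t i0 = a
      · rw [if_pos hae, Finset.image_insert, hpickt, ← hae, Function.update_self, hB]
      · rw [if_neg hae, Function.update_of_ne (fun h => hae h.symm), hB]
    · intro s hs
      rcases Nat.lt_succ_iff_lt_or_eq.mp hs with h | rfl
      · exact hC s h
      · rw [hpickt]; exact hj
    · rw [himg, Finset.card_insert_of_notMem hjnot, hD]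

lemma st1_eq {n m : ℕ} (u : Fin n → Fin m → ℝ) (π : List (Fin n)) (i0 : Fin n) (d0 : Fin m)
    (hπ : π.length = m) {t : ℕ} (ht : t ≤ m) :
    (st u π t).1 = univ \ (range t).image (pick u π i0 d0) :=
  (master u π i0 d0 hπ t ht).1

lemma pick_mem {n m : ℕ} (u : Fin n → Fin m → ℝ) (π : List (Fin n)) (i0 : Fin n) (d0 : Fin m)
    (hπ : π.length = m) {s : ℕ} (hs : s < m) :
    pick u π i0 d0 s ∈ (st u π s).1 ∧
      ∀ x ∈ (st u π s).1, u (π.getD s i0) x ≤ u (π.getD s i0) (pick u π i0 d0 s) :=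
  favorite_spec ((master u π i0 d0 hπ m le_rfl).2.2.1 s hs)

lemma st1_mono {n m : ℕ} (u : Fin n → Fin m → ℝ) (π : List (Fin n)) (i0 : Fin n) (d0 : Fin m)
    (hπ : π.length = m) {s t : ℕ} (hst : s ≤ t) (ht : t ≤ m) :
    (st u π t).1 ⊆ (st u π s).1 := by
  rw [st1_eq u π i0 d0 hπ ht, st1_eq u π i0 d0 hπ (le_trans hst ht)]
  exact Finset.sdiff_subset_sdiff (le_refl _)
    (Finset.image_subset_image (Finset.range_subset_range.mpr hst))

lemma pick_inj {n m : ℕ} (u : Fin n → Fin m → ℝ) (π : List (Fin n)) (i0 : Fin n) (d0 : Fin m)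
    (hπ : π.length = m) {s q : ℕ} (hs : s < m) (hq : q < m)
    (h : pick u π i0 d0 s = pick u π i0 d0 q) : s = q := by
  rcases lt_trichotomy s q with hlt | he | hlt
  · exfalso
    have hmem := (pick_mem u π i0 d0 hπ hq).1
    rw [st1_eq u π i0 d0 hπ (le_of_lt hq)] at hmem
    have : pick u π i0 d0 q ∈ (range q).image (pick u π i0 d0) := by
      rw [← h]
      exact Finset.mem_image_of_mem _ (Finset.mem_range.mpr hlt)
    exact (Finset.mem_sdiff.mp hmem).2 this
  · exact he
  · exfalso
    have hmem := (pick_mem u π i0 d0 hπ hs).1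
    rw [st1_eq u π i0 d0 hπ (le_of_lt hs)] at hmem
    have : pick u π i0 d0 s ∈ (range s).image (pick u π i0 d0) := by
      rw [h]
      exact Finset.mem_image_of_mem _ (Finset.mem_range.mpr hlt)
    exact (Finset.mem_sdiff.mp hmem).2 this

lemma alloc_eq {n m : ℕ} (u : Fin n → Fin m → ℝ) (π : List (Fin n)) (i0 : Fin n) (d0 : Fin m)
    (hπ : π.length = m) (a : Fin n) :
    allocate u π a = ((range m).filter (fun s => π.getD s i0 = a)).image (pick u π i0 d0) := by
  have htake : π.take m = π := by rw [← hπ]; exact π.take_length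
  have := (master u π i0 d0 hπ m le_rfl).2.1 a
  rw [st, htake] at this
  exact this

lemma pick_image_univ {n m : ℕ} (u : Fin n → Fin m → ℝ) (π : List (Fin n)) (i0 : Fin n)
    (d0 : Fin m) (hπ : π.length = m) :
    (range m).image (pick u π i0 d0) = univ := by
  apply Finset.eq_univ_of_card
  rw [(master u π i0 d0 hπ m le_rfl).2.2.2, Fintype.card_fin]

lemma sum_pick_filter {n m : ℕ} (u : Fin n → Fin m → ℝ) (π : List (Fin n)) (i0 : Fin n)
    (d0 : Fin m) (hπ : π.length = m) (f : Fin m → ℝ) (p : ℕ → Prop) [DecidablePred p] :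
    ∑ x ∈ ((range m).filter p).image (pick u π i0 d0), f x
      = ∑ s ∈ (range m).filter p, f (pick u π i0 d0 s) := by
  apply Finset.sum_image
  intro s hs q hq h
  exact pick_inj u π i0 d0 hπ (Finset.mem_range.mp (Finset.mem_filter.mp hs).1)
    (Finset.mem_range.mp (Finset.mem_filter.mp hq).1) h

lemma sum_pick_univ {n m : ℕ} (u : Fin n → Fin m → ℝ) (π : List (Fin n)) (i0 : Fin n)
    (d0 : Fin m) (hπ : π.length = m) (f : Fin m → ℝ) :
    ∑ x, f x = ∑ s ∈ range m, f (pick u π i0 d0 s) := by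
  rw [← pick_image_univ u π i0 d0 hπ]
  exact Finset.sum_image fun s hs q hq h =>
    pick_inj u π i0 d0 hπ (Finset.mem_range.mp hs) (Finset.mem_range.mp hq) h

lemma count_take_eq {n : ℕ} (π : List (Fin n)) (i0 i : Fin n) :
    ∀ k, k ≤ π.length →
      ((π.take k).count i : ℝ) = ∑ q ∈ range k, (if π.getD q i0 = i then (1:ℝ) else 0) := by
  intro k
  induction k with
  | zero => simp
  | succ k ih =>
    intro hk
    have hk' : k < π.length := hk
    rw [Finset.sum_range_succ, ← ih (le_of_lt hk'),
      show π.take (k+1) = π.take k ++ [π[k]] from (List.take_concat_get' π k hk').symm,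
      List.count_append, List.getD_eq_getElem π i0 hk']
    push_cast
    by_cases h : π[k] = i
    · simp [h]
    · simp [h, List.count_singleton', Ne.symm h]

lemma pureLemma (r : ℝ) (hr0 : 0 ≤ r) (hr1 : r ≤ 1) :
    ∀ (m : ℕ) (lam b : ℝ), 0 ≤ lam → 0 ≤ b →
    ∀ (a : ℕ → ℝ) (T : ℕ → Prop) [DecidablePred T],
    (∀ q, q < m → 0 ≤ a q) →
    (∀ t, t < m → T t → ∀ q, t < q → q < m → a q ≤ a t) →
    (∀ q, q < m → ¬ T q → a q ≤ b) →
    (∀ k, k ≤ m → r * k - lam ≤ ∑ q ∈ range k, (if T q then (1:ℝ) else 0)) →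
    r * ∑ q ∈ range m, a q ≤ (∑ q ∈ range m, if T q then a q else 0) + lam * b := by
  intro m
  induction m with
  | zero =>
    intro lam b hlam hb a T _ _ _ _ _
    simp only [range_zero, sum_empty, mul_zero, zero_add]
    positivity
  | succ m ih =>
    intro lam b hlam hb a T _ ha hmono hcomp hcount
    have hsum : ∑ q ∈ range (m+1), a q = (∑ q ∈ range m, a (q+1)) + a 0 :=
      Finset.sum_range_succ' a m
    have hsumT : (∑ q ∈ range (m+1), if T q then a q else 0)
        = (∑ q ∈ range m, if T (q+1) then a (q+1) else 0) + (if T 0 then a 0 else 0) :=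
      Finset.sum_range_succ' (fun q => if T q then a q else 0) m
    by_cases hT0 : T 0
    · -- case 0 ∈ T
      have ha0 : 0 ≤ a 0 := ha 0 (Nat.succ_pos m)
      have hb' : 0 ≤ min b (a 0) := le_min hb ha0
      have hlam' : 0 ≤ lam + 1 - r := by linarith
      have key := ih (lam + 1 - r) (min b (a 0)) hlam' hb'
        (fun q => a (q+1)) (fun q => T (q+1))
        (fun q hq => ha (q+1) (by omega))
        (fun t ht hTt q htq hq => hmono (t+1) (by omega) hTt (q+1) (by omega) (by omega))
        (fun q hq hTq => le_min (hcomp (q+1) (by omega) hTq)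
          (hmono 0 (Nat.succ_pos m) hT0 (q+1) (Nat.succ_pos q) (by omega)))
        ?_
      · rw [hsum, hsumT, if_pos hT0]
        have hmin : r * a 0 + (lam + 1 - r) * min b (a 0) ≤ a 0 + lam * b := by
          rcases le_total b (a 0) with h | h
          · rw [min_eq_left h]
            nlinarith
          · rw [min_eq_right h]
            nlinarith
        nlinarith [key]
      · intro k hk
        have := hcount (k+1) (by omega)
        rw [Finset.sum_range_succ' (fun q => if T q then (1:ℝ) else 0) k, if_pos hT0] at this
        push_cast at this ⊢
        linarith
    · -- case 0 ∉ T
      have ha0b : a 0 ≤ b := hcomp 0 (Nat.succ_pos m) hT0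
      have hrlam : r ≤ lam := by
        have := hcount 1 (by omega)
        rw [Finset.sum_range_one, if_neg hT0] at this
        push_cast at this
        linarith
      have key := ih (lam - r) b (by linarith) hb
        (fun q => a (q+1)) (fun q => T (q+1))
        (fun q hq => ha (q+1) (by omega))
        (fun t ht hTt q htq hq => hmono (t+1) (by omega) hTt (q+1) (by omega) (by omega))
        (fun q hq hTq => hcomp (q+1) (by omega) hTq)
        ?_
      · rw [hsum, hsumT, if_neg hT0]
        have hra0 : r * a 0 ≤ r * b := mul_le_mul_of_nonneg_left ha0b hr0
        nlinarith [key]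
      · intro k hk
        have := hcount (k+1) (by omega)
        rw [Finset.sum_range_succ' (fun q => if T q then (1:ℝ) else 0) k, if_neg hT0] at this
        push_cast at this ⊢
        linarith

theorem pickingSequence_WPROP1_iff
    (n m : ℕ) (w : Fin n → ℝ) (hw : ∀ i, 0 < w i)
    (π : List (Fin n)) (hlen : π.length = m) :
    (∀ u : Fin n → Fin m → ℝ, (∀ i j, 0 ≤ u i j) → isWPROP1 w u (allocate u π)) ↔
      ∀ (k : ℕ), k ≤ m → ∀ i : Fin n,
        w i / (∑ i', w i') * k - 1 ≤ ((π.take k).count i : ℝ) := by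
  constructor
  · -- forward direction
    intro hLHS k hk i
    have hW : 0 < ∑ i', w i' := Finset.sum_pos (fun j _ => hw j) ⟨i, mem_univ i⟩
    rcases Nat.eq_zero_or_pos m with hm0 | hm0
    · subst hm0
      interval_cases k
      simp
    set u : Fin n → Fin m → ℝ := fun _ j => if (j : ℕ) < k then 1 else 0 with hu
    have hunn : ∀ a j, 0 ≤ u a j := fun a j => by rw [hu]; dsimp; split <;> norm_num
    set d0 : Fin m := ⟨0, hm0⟩ with hd0
    have hLcard : (((univ : Finset (Fin m))).filter fun j : Fin m => (j : ℕ) < k).card = k := by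
      have heq : (((univ : Finset (Fin m))).filter fun j : Fin m => (j : ℕ) < k)
          = (univ : Finset (Fin k)).image (Fin.castLE hk) := by
        ext x
        simp only [Finset.mem_filter, Finset.mem_univ, true_and, Finset.mem_image]
        constructor
        · intro hx
          exact ⟨⟨(x : ℕ), hx⟩, by ext; rfl⟩
        · rintro ⟨y, rfl⟩
          exact y.2
      rw [heq, Finset.card_image_of_injective _ (Fin.castLE_injective hk), Finset.card_univ,
        Fintype.card_fin]
    have hsumu : ∑ x : Fin m, u i x = (k : ℝ) := by
      rw [hu]
      dsimp
      rw [Finset.sum_boole, hLcard]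
    have hpicklt : ∀ s, s < k → ((pick u π i d0 s : Fin m) : ℕ) < k := by
      intro s hs
      have hsm : s < m := lt_of_lt_of_le hs hk
      obtain ⟨hmem, hmax⟩ := pick_mem u π i d0 hlen hsm
      have hXne : (((st u π s).1).filter fun j : Fin m => (j : ℕ) < k).Nonempty := by
        by_contra hempty
        rw [Finset.not_nonempty_iff_eq_empty, Finset.filter_eq_empty_iff] at hempty
        have hsub : (((univ : Finset (Fin m))).filter fun j : Fin m => (j : ℕ) < k)
            ⊆ (range s).image (pick u π i d0) := by
          intro x hx
          have hxlt := (Finset.mem_filter.mp hx).2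
          by_contra hxnot
          have hxR : x ∈ (st u π s).1 := by
            rw [st1_eq u π i d0 hlen (le_of_lt hsm)]
            exact Finset.mem_sdiff.mpr ⟨Finset.mem_univ x, hxnot⟩
          exact hempty hxR hxlt
        have hcle := Finset.card_le_card hsub
        rw [hLcard, (master u π i d0 hlen s (le_of_lt hsm)).2.2.2] at hcle
        omega
      obtain ⟨x, hx⟩ := hXne
      have hxR := (Finset.mem_filter.mp hx).1
      have hxlt := (Finset.mem_filter.mp hx).2
      have hle := hmax x hxR
      by_contra hge
      have e1 : u (π.getD s i) x = 1 := if_pos hxlt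
      have e2 : u (π.getD s i) (pick u π i d0 s) = 0 := if_neg hge
      rw [e1, e2] at hle
      norm_num at hle
    have himgk : (range k).image (pick u π i d0)
        = ((univ : Finset (Fin m))).filter fun j : Fin m => (j : ℕ) < k := by
      apply Finset.eq_of_subset_of_card_le
      · intro x hx
        obtain ⟨s, hs, rfl⟩ := Finset.mem_image.mp hx
        exact Finset.mem_filter.mpr ⟨Finset.mem_univ _, hpicklt s (Finset.mem_range.mp hs)⟩
      · rw [hLcard, (master u π i d0 hlen k hk).2.2.2]
    have hpickge : ∀ s, k ≤ s → s < m → ¬ ((pick u π i d0 s : ℕ) < k) := by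
      intro s hks hsm hlt
      have hmem := (pick_mem u π i d0 hlen hsm).1
      rw [st1_eq u π i d0 hlen (le_of_lt hsm)] at hmem
      have h1 : pick u π i d0 s ∈ (range k).image (pick u π i d0) := by
        rw [himgk]
        exact Finset.mem_filter.mpr ⟨Finset.mem_univ _, hlt⟩
      have h2 : pick u π i d0 s ∈ (range s).image (pick u π i d0) :=
        Finset.image_subset_image (Finset.range_subset_range.mpr hks) h1
      exact (Finset.mem_sdiff.mp hmem).2 h2
    have hMi : ∑ x ∈ allocate u π i, u i x = ((π.take k).count i : ℝ) := by
      rw [alloc_eq u π i d0 hlen i, sum_pick_filter u π i d0 hlen (u i), Finset.sum_filter,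
        count_take_eq π i i k (by omega)]
      rw [Finset.range_eq_Ico, ← Finset.sum_Ico_consecutive _ (Nat.zero_le k) hk,
        ← Finset.range_eq_Ico]
      have h2 : ∑ s ∈ Finset.Ico k m,
          (if π.getD s i = i then u i (pick u π i d0 s) else 0) = 0 := by
        apply Finset.sum_eq_zero
        intro s hs
        obtain ⟨hks, hsm⟩ := Finset.mem_Ico.mp hs
        have := hpickge s hks hsm
        rw [hu]
        simp only [if_neg this]
        split <;> rfl
      have h1 : ∑ s ∈ range k, (if π.getD s i = i then u i (pick u π i d0 s) else 0)
          = ∑ q ∈ range k, (if π.getD q i = i then (1:ℝ) else 0) := by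
        apply Finset.sum_congr rfl
        intro s hs
        have := hpicklt s (Finset.mem_range.mp hs)
        have e : u i (pick u π i d0 s) = 1 := if_pos this
        rw [e]
      rw [h1, h2, add_zero]
    obtain ⟨B, hBsub, hBcard, hineq⟩ := hLHS u hunn i
    rw [hsumu, hMi] at hineq
    have hBle : ∑ x ∈ B, u i x ≤ 1 := by
      calc ∑ x ∈ B, u i x ≤ ∑ _x ∈ B, (1:ℝ) := by
            apply Finset.sum_le_sum
            intro x _
            rw [hu]; dsimp; split <;> norm_num
        _ = B.card := by rw [Finset.sum_const, nsmul_eq_mul, mul_one]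
        _ ≤ 1 := by exact_mod_cast hBcard
    linarith
  · -- backward direction
    intro hRHS u hu i
    have hW : 0 < ∑ i', w i' := Finset.sum_pos (fun j _ => hw j) ⟨i, mem_univ i⟩
    have hr0 : 0 ≤ w i / ∑ i', w i' := le_of_lt (div_pos (hw i) hW)
    have hr1 : w i / ∑ i', w i' ≤ 1 := by
      rw [div_le_one hW]
      exact Finset.single_le_sum (fun j _ => le_of_lt (hw j)) (mem_univ i)
    rcases Nat.eq_zero_or_pos m with hm0 | hm0
    · subst hm0
      refine ⟨∅, Finset.empty_subset _, by simp, ?_⟩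
      have h1 : ∑ x : Fin 0, u i x = 0 := rfl
      have h2 : ∑ x ∈ allocate u π i, u i x = 0 := by
        rw [Finset.sum_eq_zero]
        intro x _
        exact absurd x.2 (by omega)
      rw [h1, h2]
      simp
    set d0 : Fin m := ⟨0, hm0⟩ with hd0
    by_cases hcompl : ((univ : Finset (Fin m)) \ allocate u π i).Nonempty
    · obtain ⟨j0, hj0mem, hj0max⟩ := Finset.exists_max_image _ (u i) hcompl
      refine ⟨{j0}, Finset.singleton_subset_iff.mpr hj0mem, by simp, ?_⟩
      have key := pureLemma (w i / ∑ i', w i') hr0 hr1 m 1 (u i j0) zero_le_one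
        (hu i j0) (fun s => u i (pick u π i d0 s)) (fun s => π.getD s i = i)
        (fun q _ => hu i _)
        ?_ ?_ ?_
      · have e1 : ∑ x : Fin m, u i x = ∑ s ∈ range m, u i (pick u π i d0 s) :=
          sum_pick_univ u π i d0 hlen (u i)
        have e2 : (∑ s ∈ range m, if π.getD s i = i then u i (pick u π i d0 s) else 0)
            = ∑ x ∈ allocate u π i, u i x := by
          rw [← Finset.sum_filter, alloc_eq u π i d0 hlen i,
            sum_pick_filter u π i d0 hlen (u i)]
        rw [e1]
        rw [e2] at key
        rw [Finset.sum_singleton]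
        linarith
      · -- hmono
        intro t ht hTt q htq hq
        have hmem : pick u π i d0 q ∈ (st u π t).1 :=
          st1_mono u π i d0 hlen (le_of_lt htq) (le_of_lt hq) (pick_mem u π i d0 hlen hq).1
        have := (pick_mem u π i d0 hlen ht).2 _ hmem
        rw [hTt] at this
        exact this
      · -- hcomp
        intro q hq hTq
        have hnotin : pick u π i d0 q ∉ allocate u π i := by
          rw [alloc_eq u π i d0 hlen i]
          intro hmem
          obtain ⟨s, hs, hse⟩ := Finset.mem_image.mp hmem
          obtain ⟨hsr, hsi⟩ := Finset.mem_filter.mp hs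
          have := pick_inj u π i d0 hlen (Finset.mem_range.mp hsr) hq hse
          rw [this] at hsi
          exact hTq hsi
        exact hj0max _ (Finset.mem_sdiff.mpr ⟨Finset.mem_univ _, hnotin⟩)
      · -- hcount
        intro k hk
        have := hRHS k hk i
        rw [count_take_eq π i i k (by omega)] at this
        linarith
    · -- complement empty : M i = univ
      rw [Finset.not_nonempty_iff_eq_empty, Finset.sdiff_eq_empty_iff_subset] at hcompl
      have hMi : allocate u π i = univ :=
        Finset.Subset.antisymm (Finset.subset_univ _) hcompl
      refine ⟨∅, Finset.empty_subset _, by simp, ?_⟩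
      rw [hMi, Finset.sum_empty, sub_zero]
      have hS : 0 ≤ ∑ x : Fin m, u i x := Finset.sum_nonneg fun x _ => hu i x
      nlinarith
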